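/- Let A₁ be the subgroup of ℤ³ generated by (1,0,−24), (0,1,8), (0,0,64), with A₀ as above and f,g the coordinate projections. Then A₁ is the internal direct sum of (ker f ∩ A₁) and the cyclic subgroup generated by (1,3,0), and also the internal direct sum of (ker g ∩ A₁) and the cyclic subgroup generated by (3,1,0). -/

import Mathlib

/-- First-coordinate projection `ℤ³ → ℤ`. -/
def f : ℤ × ℤ × ℤ →+ ℤ := AddMonoidHom.fst ℤ (ℤ × ℤ)

/-- Second-coordinate projection `ℤ³ → ℤ`. -/
def g : ℤ × ℤ × ℤ →+ ℤ := (AddMonoidHom.fst ℤ ℤ).comp (AddMonoidHom.snd ℤ (ℤ × ℤ))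

/-- The subgroup `A₁` of `ℤ³`. -/
def A1 : AddSubgroup (ℤ × ℤ × ℤ) := AddSubgroup.closure {(1, 0, -24), (0, 1, 8), (0, 0, 64)}

lemma memA1 {x : ℤ × ℤ × ℤ} : x ∈ A1 ↔ ∃ k : ℤ, x.2.2 = -24 * x.1 + 8 * x.2.1 + 64 * k := by
  constructor
  · intro hx
    induction hx using AddSubgroup.closure_induction with
    | mem y hy =>
      rcases hy with h | h | h <;> subst h
      · exact ⟨0, by ring⟩
      · exact ⟨0, by ring⟩
      · exact ⟨1, by ring⟩
    | zero => exact ⟨0, by simp⟩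
    | add a b _ _ ha hb =>
      obtain ⟨k, hk⟩ := ha; obtain ⟨l, hl⟩ := hb
      exact ⟨k + l, by simp only [Prod.fst_add, Prod.snd_add]; rw [hk, hl]; ring⟩
    | neg a _ ha =>
      obtain ⟨k, hk⟩ := ha
      exact ⟨-k, by simp only [Prod.fst_neg, Prod.snd_neg]; rw [hk]; ring⟩
  · rintro ⟨k, hk⟩
    have hx : x = x.1 • ((1, 0, -24) : ℤ × ℤ × ℤ) + x.2.1 • (0, 1, 8) + k • (0, 0, 64) := by
      ext <;> simp [hk] <;> ring_nf
    rw [hx]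
    exact add_mem (add_mem (AddSubgroup.zsmul_mem _ (AddSubgroup.subset_closure (by simp)) _)
      (AddSubgroup.zsmul_mem _ (AddSubgroup.subset_closure (by simp)) _))
      (AddSubgroup.zsmul_mem _ (AddSubgroup.subset_closure (by simp)) _)

theorem stmt11 :
    ((f.ker ⊓ A1) ⊓ AddSubgroup.closure {((1, 3, 0) : ℤ × ℤ × ℤ)} = ⊥ ∧
     (f.ker ⊓ A1) ⊔ AddSubgroup.closure {((1, 3, 0) : ℤ × ℤ × ℤ)} = A1) ∧
    ((g.ker ⊓ A1) ⊓ AddSubgroup.closure {((3, 1, 0) : ℤ × ℤ × ℤ)} = ⊥ ∧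
     (g.ker ⊓ A1) ⊔ AddSubgroup.closure {((3, 1, 0) : ℤ × ℤ × ℤ)} = A1) := by
  have h13 : ((1, 3, 0) : ℤ × ℤ × ℤ) ∈ A1 := memA1.mpr ⟨0, by ring⟩
  have h31 : ((3, 1, 0) : ℤ × ℤ × ℤ) ∈ A1 := memA1.mpr ⟨1, by ring⟩
  refine ⟨⟨?_, ?_⟩, ?_, ?_⟩
  · ext x
    simp only [AddSubgroup.mem_inf, AddSubgroup.mem_bot, AddMonoidHom.mem_ker,
      AddSubgroup.mem_closure_singleton]
    constructor
    · rintro ⟨⟨hf, -⟩, n, rfl⟩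
      have hn : n = 0 := by simpa [f] using hf
      simp [hn]
    · rintro rfl; exact ⟨⟨map_zero f, AddSubgroup.zero_mem _⟩, 0, by simp⟩
  · apply le_antisymm
    · exact sup_le inf_le_right ((AddSubgroup.closure_le _).mpr (by simpa using h13))
    · intro x hx
      have hy : x - x.1 • ((1, 3, 0) : ℤ × ℤ × ℤ) ∈ f.ker ⊓ A1 := by
        refine ⟨AddMonoidHom.mem_ker.mpr ?_,
          AddSubgroup.sub_mem _ hx (AddSubgroup.zsmul_mem _ h13 _)⟩
        simp [f]
      have hz : x.1 • ((1, 3, 0) : ℤ × ℤ × ℤ) ∈ AddSubgroup.closure {((1, 3, 0) : ℤ × ℤ × ℤ)} :=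
        AddSubgroup.mem_closure_singleton.mpr ⟨x.1, rfl⟩
      have h := AddSubgroup.add_mem _ (AddSubgroup.mem_sup_left hy) (AddSubgroup.mem_sup_right hz)
      rwa [sub_add_cancel] at h
  · ext x
    simp only [AddSubgroup.mem_inf, AddSubgroup.mem_bot, AddMonoidHom.mem_ker,
      AddSubgroup.mem_closure_singleton]
    constructor
    · rintro ⟨⟨hg, -⟩, n, rfl⟩
      have hn : n = 0 := by simpa [g] using hg
      simp [hn]
    · rintro rfl; exact ⟨⟨map_zero g, AddSubgroup.zero_mem _⟩, 0, by simp⟩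
  · apply le_antisymm
    · exact sup_le inf_le_right ((AddSubgroup.closure_le _).mpr (by simpa using h31))
    · intro x hx
      have hy : x - x.2.1 • ((3, 1, 0) : ℤ × ℤ × ℤ) ∈ g.ker ⊓ A1 := by
        refine ⟨AddMonoidHom.mem_ker.mpr ?_,
          AddSubgroup.sub_mem _ hx (AddSubgroup.zsmul_mem _ h31 _)⟩
        simp [g]
      have hz : x.2.1 • ((3, 1, 0) : ℤ × ℤ × ℤ) ∈ AddSubgroup.closure {((3, 1, 0) : ℤ × ℤ × ℤ)} :=
        AddSubgroup.mem_closure_singleton.mpr ⟨x.2.1, rfl⟩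
      have h := AddSubgroup.add_mem _ (AddSubgroup.mem_sup_left hy) (AddSubgroup.mem_sup_right hz)
      rwa [sub_add_cancel] at h
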